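/- If deriveF returns none then the token's kind does not start the focused syntax: for every LL(1) focused syntax (s, c) and token t, if deriveF t (s, c) = none then kind t ∉ First (unfocus (s, c)). -/

import Mathlib

set_option autoImplicit false

/-- Context-free syntaxes (value-aware context-free expressions). -/
inductive Syn (Token Kind : Type) (Var : Type → Type) : Type → Type 1 where
  | elem (k : Kind) : Syn Token Kind Var Token
  | fail {A : Type} : Syn Token Kind Var A
  | eps {A : Type} (v : A) : Syn Token Kind Var A
  | disj {A : Type} (s₁ s₂ : Syn Token Kind Var A) : Syn Token Kind Var A
  | seqn {A B : Type} (s₁ : Syn Token Kind Var A) (s₂ : Syn Token Kind Var B) :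
      Syn Token Kind Var (A × B)
  | map {A B : Type} (f : A → B) (s : Syn Token Kind Var A) : Syn Token Kind Var B
  | var {A : Type} (x : Var A) : Syn Token Kind Var A

section

variable {Token Kind : Type} {Var : Type → Type}
variable (kd : Token → Kind) (env : ∀ A : Type, Var A → Syn Token Kind Var A)

/-- Semantics of syntaxes. -/
inductive Matches : ∀ {A : Type}, Syn Token Kind Var A → List Token → A → Prop where
  | elem {k : Kind} {t : Token} (h : kd t = k) : Matches (Syn.elem k) [t] t
  | eps {A : Type} (v : A) : Matches (Syn.eps v) [] v
  | disjL {A : Type} {s₁ s₂ : Syn Token Kind Var A} {ts : List Token} {v : A} :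
      Matches s₁ ts v → Matches (Syn.disj s₁ s₂) ts v
  | disjR {A : Type} {s₁ s₂ : Syn Token Kind Var A} {ts : List Token} {v : A} :
      Matches s₂ ts v → Matches (Syn.disj s₁ s₂) ts v
  | seqn {A B : Type} {s₁ : Syn Token Kind Var A} {s₂ : Syn Token Kind Var B}
      {ts₁ ts₂ : List Token} {v₁ : A} {v₂ : B} :
      Matches s₁ ts₁ v₁ → Matches s₂ ts₂ v₂ →
      Matches (Syn.seqn s₁ s₂) (ts₁ ++ ts₂) (v₁, v₂)
  | map {A B : Type} (f : A → B) {s : Syn Token Kind Var A} {ts : List Token} {v : A} :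
      Matches s ts v → Matches (Syn.map f s) ts (f v)
  | var {A : Type} (x : Var A) {ts : List Token} {v : A} :
      Matches (env A x) ts v → Matches (Syn.var x) ts v

/-- Productivity. -/
inductive Productive : ∀ {A : Type}, Syn Token Kind Var A → Prop where
  | eps {A : Type} (v : A) : Productive (Syn.eps v)
  | elem (k : Kind) : Productive (Syn.elem k)
  | disjL {A : Type} {s₁ s₂ : Syn Token Kind Var A} :
      Productive s₁ → Productive (Syn.disj s₁ s₂)
  | disjR {A : Type} {s₁ s₂ : Syn Token Kind Var A} :
      Productive s₂ → Productive (Syn.disj s₁ s₂)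
  | seqn {A B : Type} {s₁ : Syn Token Kind Var A} {s₂ : Syn Token Kind Var B} :
      Productive s₁ → Productive s₂ → Productive (Syn.seqn s₁ s₂)
  | map {A B : Type} (f : A → B) {s : Syn Token Kind Var A} :
      Productive s → Productive (Syn.map f s)
  | var {A : Type} (x : Var A) : Productive (env A x) → Productive (Syn.var x)

/-- Nullability, with associated value. -/
inductive Nullable : ∀ {A : Type}, Syn Token Kind Var A → A → Prop where
  | eps {A : Type} (v : A) : Nullable (Syn.eps v) v
  | disjL {A : Type} {s₁ s₂ : Syn Token Kind Var A} {v : A} :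
      Nullable s₁ v → Nullable (Syn.disj s₁ s₂) v
  | disjR {A : Type} {s₁ s₂ : Syn Token Kind Var A} {v : A} :
      Nullable s₂ v → Nullable (Syn.disj s₁ s₂) v
  | seqn {A B : Type} {s₁ : Syn Token Kind Var A} {s₂ : Syn Token Kind Var B} {v₁ : A} {v₂ : B} :
      Nullable s₁ v₁ → Nullable s₂ v₂ → Nullable (Syn.seqn s₁ s₂) (v₁, v₂)
  | map {A B : Type} (f : A → B) {s : Syn Token Kind Var A} {v : A} :
      Nullable s v → Nullable (Syn.map f s) (f v)
  | var {A : Type} (x : Var A) {v : A} : Nullable (env A x) v → Nullable (Syn.var x) v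

/-- First sets: `InFirst env k s` means `k ∈ First s`. -/
inductive InFirst : ∀ {A : Type}, Kind → Syn Token Kind Var A → Prop where
  | elem (k : Kind) : InFirst k (Syn.elem k)
  | disjL {A : Type} {k : Kind} {s₁ s₂ : Syn Token Kind Var A} :
      InFirst k s₁ → InFirst k (Syn.disj s₁ s₂)
  | disjR {A : Type} {k : Kind} {s₁ s₂ : Syn Token Kind Var A} :
      InFirst k s₂ → InFirst k (Syn.disj s₁ s₂)
  | seqnL {A B : Type} {k : Kind} {s₁ : Syn Token Kind Var A} {s₂ : Syn Token Kind Var B} :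
      InFirst k s₁ → Productive env s₂ → InFirst k (Syn.seqn s₁ s₂)
  | seqnR {A B : Type} {k : Kind} {s₁ : Syn Token Kind Var A} {s₂ : Syn Token Kind Var B}
      {v : A} : Nullable env s₁ v → InFirst k s₂ → InFirst k (Syn.seqn s₁ s₂)
  | map {A B : Type} {k : Kind} (f : A → B) {s : Syn Token Kind Var A} :
      InFirst k s → InFirst k (Syn.map f s)
  | var {A : Type} {k : Kind} (x : Var A) : InFirst k (env A x) → InFirst k (Syn.var x)

/-- Should-not-follow sets: `InSNF env k s` means `k ∈ ShouldNotFollow s`. -/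
inductive InSNF : ∀ {A : Type}, Kind → Syn Token Kind Var A → Prop where
  | disjL {A : Type} {k : Kind} {s₁ s₂ : Syn Token Kind Var A} :
      InSNF k s₁ → InSNF k (Syn.disj s₁ s₂)
  | disjR {A : Type} {k : Kind} {s₁ s₂ : Syn Token Kind Var A} :
      InSNF k s₂ → InSNF k (Syn.disj s₁ s₂)
  | disjFN {A : Type} {k : Kind} {s₁ s₂ : Syn Token Kind Var A} {v : A} :
      InFirst env k s₁ → Nullable env s₂ v → InSNF k (Syn.disj s₁ s₂)
  | disjNF {A : Type} {k : Kind} {s₁ s₂ : Syn Token Kind Var A} {v : A} :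
      Nullable env s₁ v → InFirst env k s₂ → InSNF k (Syn.disj s₁ s₂)
  | seqnL {A B : Type} {k : Kind} {s₁ : Syn Token Kind Var A} {s₂ : Syn Token Kind Var B}
      {v : B} : InSNF k s₁ → Nullable env s₂ v → InSNF k (Syn.seqn s₁ s₂)
  | seqnR {A B : Type} {k : Kind} {s₁ : Syn Token Kind Var A} {s₂ : Syn Token Kind Var B} :
      Productive env s₁ → InSNF k s₂ → InSNF k (Syn.seqn s₁ s₂)
  | map {A B : Type} {k : Kind} (f : A → B) {s : Syn Token Kind Var A} :
      InSNF k s → InSNF k (Syn.map f s)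
  | var {A : Type} {k : Kind} (x : Var A) : InSNF k (env A x) → InSNF k (Syn.var x)

/-- LL(1) conflicts. A syntax `s` is LL(1) iff `¬ HasConflict env s`. -/
inductive HasConflict : ∀ {A : Type}, Syn Token Kind Var A → Prop where
  | disjNN {A : Type} {s₁ s₂ : Syn Token Kind Var A} {v₁ v₂ : A} :
      Nullable env s₁ v₁ → Nullable env s₂ v₂ → HasConflict (Syn.disj s₁ s₂)
  | disjFF {A : Type} {s₁ s₂ : Syn Token Kind Var A} {k : Kind} :
      InFirst env k s₁ → InFirst env k s₂ → HasConflict (Syn.disj s₁ s₂)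
  | disjL {A : Type} {s₁ s₂ : Syn Token Kind Var A} :
      HasConflict s₁ → HasConflict (Syn.disj s₁ s₂)
  | disjR {A : Type} {s₁ s₂ : Syn Token Kind Var A} :
      HasConflict s₂ → HasConflict (Syn.disj s₁ s₂)
  | seqnSF {A B : Type} {s₁ : Syn Token Kind Var A} {s₂ : Syn Token Kind Var B} {k : Kind} :
      InSNF env k s₁ → InFirst env k s₂ → HasConflict (Syn.seqn s₁ s₂)
  | seqnL {A B : Type} {s₁ : Syn Token Kind Var A} {s₂ : Syn Token Kind Var B} :
      HasConflict s₁ → HasConflict (Syn.seqn s₁ s₂)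
  | seqnR {A B : Type} {s₁ : Syn Token Kind Var A} {s₂ : Syn Token Kind Var B} :
      HasConflict s₂ → HasConflict (Syn.seqn s₁ s₂)
  | map {A B : Type} (f : A → B) {s : Syn Token Kind Var A} :
      HasConflict s → HasConflict (Syn.map f s)
  | var {A : Type} (x : Var A) : HasConflict (env A x) → HasConflict (Syn.var x)

end

/-- Layers of a context, with above type `A` and below type `B`. -/
inductive Layer (Token Kind : Type) (Var : Type → Type) : Type → Type → Type 1 where
  | apply {A B : Type} (f : A → B) : Layer Token Kind Var A B
  | prepend {A C : Type} (v : C) : Layer Token Kind Var A (C × A)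
  | followBy {A C : Type} (s : Syn Token Kind Var C) : Layer Token Kind Var A (A × C)

/-- Type-aligned contexts (stacks of layers). -/
inductive Ctx (Token Kind : Type) (Var : Type → Type) : Type → Type → Type 1 where
  | nil {A : Type} : Ctx Token Kind Var A A
  | cons {A B C : Type} (l : Layer Token Kind Var A B) (c : Ctx Token Kind Var B C) :
      Ctx Token Kind Var A C

section

variable {Token Kind : Type} {Var : Type → Type}

def Ctx.isNil : ∀ {A B : Type}, Ctx Token Kind Var A B → Bool
  | _, _, Ctx.nil => true
  | _, _, Ctx.cons _ _ => false

/-- Unfocusing a focused syntax. -/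
def unfocus : ∀ {A B : Type}, Syn Token Kind Var A → Ctx Token Kind Var A B →
    Syn Token Kind Var B
  | _, _, s, Ctx.nil => s
  | _, _, s, Ctx.cons (Layer.apply f) c => unfocus (Syn.map f s) c
  | _, _, s, Ctx.cons (Layer.prepend v) c => unfocus (Syn.seqn (Syn.eps v) s) c
  | _, _, s, Ctx.cons (Layer.followBy s') c => unfocus (Syn.seqn s s') c

/-- Focused syntaxes with below type `B`. -/
def Focused (Token Kind : Type) (Var : Type → Type) (B : Type) : Type 1 :=
  (A : Type) × Syn Token Kind Var A × Ctx Token Kind Var A B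

def unfocusF {B : Type} (fs : Focused Token Kind Var B) : Syn Token Kind Var B :=
  unfocus fs.2.1 fs.2.2

def focusF {A : Type} (s : Syn Token Kind Var A) : Focused Token Kind Var A :=
  ⟨A, s, Ctx.nil⟩

/-- Plugging a value into a context. -/
def plug : ∀ {A B : Type}, A → Ctx Token Kind Var A B → Focused Token Kind Var B
  | A, _, v, Ctx.nil => ⟨A, Syn.eps v, Ctx.nil⟩
  | _, _, v, Ctx.cons (Layer.apply f) c => plug (f v) c
  | _, _, v, Ctx.cons (Layer.prepend v') c => plug (v', v) c
  | _, _, v, Ctx.cons (Layer.followBy s) c => ⟨_, s, Ctx.cons (Layer.prepend v) c⟩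

end

section AuxLemmas

variable {Token Kind : Type} {Var : Type → Type}
variable (env : ∀ A : Type, Var A → Syn Token Kind Var A)

def ctxSize : ∀ {A B : Type}, Ctx Token Kind Var A B → Nat
  | _, _, Ctx.nil => 0
  | _, _, Ctx.cons (Layer.apply _) c => 1 + ctxSize c
  | _, _, Ctx.cons (Layer.prepend _) c => 1 + ctxSize c
  | _, _, Ctx.cons (Layer.followBy _) c => 2 + ctxSize c

/-! ### Inversion lemmas (via motives matching on the syntax index) -/

def NullInv : ∀ {C : Type}, Syn Token Kind Var C → C → Prop
  | _, Syn.eps v, w => w = v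
  | _, Syn.elem _, _ => False
  | _, Syn.fail, _ => False
  | _, Syn.disj s₁ s₂, w => Nullable env s₁ w ∨ Nullable env s₂ w
  | _, Syn.seqn s₁ s₂, w => Nullable env s₁ w.1 ∧ Nullable env s₂ w.2
  | _, Syn.map f s, w => ∃ v, Nullable env s v ∧ w = f v
  | _, Syn.var x, w => Nullable env (env _ x) w

theorem nullable_inv {C : Type} {s : Syn Token Kind Var C} {w : C}
    (h : Nullable env s w) : NullInv env s w := by
  cases h with
  | eps v => rfl
  | disjL h => exact Or.inl h
  | disjR h => exact Or.inr h
  | seqn h₁ h₂ => exact ⟨h₁, h₂⟩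
  | map f h => exact ⟨_, h, rfl⟩
  | var x h => exact h

def FirstInv (k : Kind) : ∀ {C : Type}, Syn Token Kind Var C → Prop
  | _, Syn.eps _ => False
  | _, Syn.elem k' => k = k'
  | _, Syn.fail => False
  | _, Syn.disj s₁ s₂ => InFirst env k s₁ ∨ InFirst env k s₂
  | _, Syn.seqn s₁ s₂ =>
      (InFirst env k s₁ ∧ Productive env s₂) ∨
        ∃ v, Nullable env s₁ v ∧ InFirst env k s₂
  | _, Syn.map _ s => InFirst env k s
  | _, Syn.var x => InFirst env k (env _ x)

theorem first_inv {k : Kind} {C : Type} {s : Syn Token Kind Var C}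
    (h : InFirst env k s) : FirstInv env k s := by
  cases h with
  | elem k => rfl
  | disjL h => exact Or.inl h
  | disjR h => exact Or.inr h
  | seqnL h₁ h₂ => exact Or.inl ⟨h₁, h₂⟩
  | seqnR h₁ h₂ => exact Or.inr ⟨_, h₁, h₂⟩
  | map f h => exact h
  | var x h => exact h

def ProdInv : ∀ {C : Type}, Syn Token Kind Var C → Prop
  | _, Syn.eps _ => True
  | _, Syn.elem _ => True
  | _, Syn.fail => False
  | _, Syn.disj s₁ s₂ => Productive env s₁ ∨ Productive env s₂
  | _, Syn.seqn s₁ s₂ => Productive env s₁ ∧ Productive env s₂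
  | _, Syn.map _ s => Productive env s
  | _, Syn.var x => Productive env (env _ x)

theorem productive_inv {C : Type} {s : Syn Token Kind Var C}
    (h : Productive env s) : ProdInv env s := by
  cases h with
  | eps v => trivial
  | elem k => trivial
  | disjL h => exact Or.inl h
  | disjR h => exact Or.inr h
  | seqn h₁ h₂ => exact ⟨h₁, h₂⟩
  | map f h => exact h
  | var x h => exact h

def SNFInv (k : Kind) : ∀ {C : Type}, Syn Token Kind Var C → Prop
  | _, Syn.eps _ => False
  | _, Syn.elem _ => False
  | _, Syn.fail => False
  | _, Syn.disj s₁ s₂ =>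
      InSNF env k s₁ ∨ InSNF env k s₂ ∨
        (InFirst env k s₁ ∧ ∃ v, Nullable env s₂ v) ∨
        ((∃ v, Nullable env s₁ v) ∧ InFirst env k s₂)
  | _, Syn.seqn s₁ s₂ =>
      (InSNF env k s₁ ∧ ∃ v, Nullable env s₂ v) ∨
        (Productive env s₁ ∧ InSNF env k s₂)
  | _, Syn.map _ s => InSNF env k s
  | _, Syn.var x => InSNF env k (env _ x)

theorem snf_inv {k : Kind} {C : Type} {s : Syn Token Kind Var C}
    (h : InSNF env k s) : SNFInv env k s := by
  cases h with
  | disjL h => exact Or.inl h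
  | disjR h => exact Or.inr (Or.inl h)
  | disjFN h₁ h₂ => exact Or.inr (Or.inr (Or.inl ⟨h₁, _, h₂⟩))
  | disjNF h₁ h₂ => exact Or.inr (Or.inr (Or.inr ⟨⟨_, h₁⟩, h₂⟩))
  | seqnL h₁ h₂ => exact Or.inl ⟨h₁, _, h₂⟩
  | seqnR h₁ h₂ => exact Or.inr ⟨h₁, h₂⟩
  | map f h => exact h
  | var x h => exact h

def ConfInv : ∀ {C : Type}, Syn Token Kind Var C → Prop
  | _, Syn.eps _ => False
  | _, Syn.elem _ => False
  | _, Syn.fail => False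
  | _, Syn.disj s₁ s₂ =>
      ((∃ v, Nullable env s₁ v) ∧ ∃ v, Nullable env s₂ v) ∨
        (∃ k, InFirst env k s₁ ∧ InFirst env k s₂) ∨
        HasConflict env s₁ ∨ HasConflict env s₂
  | _, Syn.seqn s₁ s₂ =>
      (∃ k, InSNF env k s₁ ∧ InFirst env k s₂) ∨
        HasConflict env s₁ ∨ HasConflict env s₂
  | _, Syn.map _ s => HasConflict env s
  | _, Syn.var x => HasConflict env (env _ x)

theorem conflict_inv {C : Type} {s : Syn Token Kind Var C}
    (h : HasConflict env s) : ConfInv env s := by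
  cases h with
  | disjNN h₁ h₂ => exact Or.inl ⟨⟨_, h₁⟩, _, h₂⟩
  | disjFF h₁ h₂ => exact Or.inr (Or.inl ⟨_, h₁, h₂⟩)
  | disjL h => exact Or.inr (Or.inr (Or.inl h))
  | disjR h => exact Or.inr (Or.inr (Or.inr h))
  | seqnSF h₁ h₂ => exact Or.inl ⟨_, h₁, h₂⟩
  | seqnL h => exact Or.inr (Or.inl h)
  | seqnR h => exact Or.inr (Or.inr h)
  | map f h => exact h
  | var x h => exact h

/-! ### Basic lemmas -/

theorem conflict_unfocus : ∀ {A B : Type} (c : Ctx Token Kind Var A B)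
    (s : Syn Token Kind Var A), HasConflict env s → HasConflict env (unfocus s c)
  | _, _, Ctx.nil, _, h => h
  | _, _, Ctx.cons (Layer.apply f) c, _, h => conflict_unfocus c _ (HasConflict.map f h)
  | _, _, Ctx.cons (Layer.prepend v) c, _, h => conflict_unfocus c _ (HasConflict.seqnR h)
  | _, _, Ctx.cons (Layer.followBy s') c, _, h => conflict_unfocus c _ (HasConflict.seqnL h)

theorem nullable_productive {A : Type} {s : Syn Token Kind Var A} {v : A}
    (h : Nullable env s v) : Productive env s := by
  induction h with
  | eps v => exact Productive.eps v
  | disjL _ ih => exact Productive.disjL ih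
  | disjR _ ih => exact Productive.disjR ih
  | seqn _ _ ih₁ ih₂ => exact Productive.seqn ih₁ ih₂
  | map f _ ih => exact Productive.map f ih
  | var x _ ih => exact Productive.var x ih

theorem nullable_det {A : Type} {s : Syn Token Kind Var A} {v₁ : A}
    (h₁ : Nullable env s v₁) :
    ∀ {v₂ : A}, ¬ HasConflict env s → Nullable env s v₂ → v₁ = v₂ := by
  induction h₁ with
  | eps v => intro v₂ _ h₂; exact (nullable_inv env h₂).symm
  | disjL h ih =>
      intro v₂ hc h₂
      rcases nullable_inv env h₂ with h' | h'
      · exact ih (fun c => hc (HasConflict.disjL c)) h'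
      · exact absurd (HasConflict.disjNN h h') hc
  | disjR h ih =>
      intro v₂ hc h₂
      rcases nullable_inv env h₂ with h' | h'
      · exact absurd (HasConflict.disjNN h' h) hc
      · exact ih (fun c => hc (HasConflict.disjR c)) h'
  | seqn h₁ h₂ ih₁ ih₂ =>
      intro v₂ hc hh
      obtain ⟨x, y⟩ := v₂
      obtain ⟨hx, hy⟩ := nullable_inv env hh
      rw [ih₁ (fun c => hc (HasConflict.seqnL c)) hx,
        ih₂ (fun c => hc (HasConflict.seqnR c)) hy]
  | map f h ih =>
      intro v₂ hc h₂
      obtain ⟨w, hw, rfl⟩ := nullable_inv env h₂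
      rw [ih (fun c => hc (HasConflict.map f c)) hw]
  | var x h ih =>
      intro v₂ hc h₂
      exact ih (fun c => hc (HasConflict.var x c)) (nullable_inv env h₂)

/-! ### The simulation relation -/

def SimRel (k : Kind) {A : Type} (s₁ s₂ : Syn Token Kind Var A) : Prop :=
  (InFirst env k s₂ → InFirst env k s₁) ∧
  (∀ k', InFirst env k' s₁ → InFirst env k' s₂) ∧
  (∀ v, Nullable env s₁ v ↔ Nullable env s₂ v) ∧
  (Productive env s₁ ↔ Productive env s₂) ∧
  (∀ k', InSNF env k' s₁ → InSNF env k' s₂) ∧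
  (HasConflict env s₁ → HasConflict env s₂)

theorem simRel_refl (k : Kind) {A : Type} (s : Syn Token Kind Var A) : SimRel env k s s :=
  ⟨id, fun _ => id, fun _ => Iff.rfl, Iff.rfl, fun _ => id, id⟩

theorem simRel_map {k : Kind} {A B : Type} (f : A → B) {s₁ s₂ : Syn Token Kind Var A}
    (h : SimRel env k s₁ s₂) : SimRel env k (Syn.map f s₁) (Syn.map f s₂) := by
  obtain ⟨h1, h2, h3, h4, h5, h6⟩ := h
  refine ⟨?_, ?_, ?_, ?_, ?_, ?_⟩
  · intro hf; exact InFirst.map f (h1 (first_inv env hf))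
  · intro k' hf; exact InFirst.map f (h2 k' (first_inv env hf))
  · intro v; constructor
    · intro hn
      obtain ⟨w, hw, rfl⟩ := nullable_inv env hn
      exact Nullable.map f ((h3 _).mp hw)
    · intro hn
      obtain ⟨w, hw, rfl⟩ := nullable_inv env hn
      exact Nullable.map f ((h3 _).mpr hw)
  · constructor
    · intro hp; exact Productive.map f (h4.mp (productive_inv env hp))
    · intro hp; exact Productive.map f (h4.mpr (productive_inv env hp))
  · intro k' hs; exact InSNF.map f (h5 k' (snf_inv env hs))
  · intro hc; exact HasConflict.map f (h6 (conflict_inv env hc))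

theorem simRel_seqn {k : Kind} {A B : Type} {s₁ s₂ : Syn Token Kind Var A}
    {t₁ t₂ : Syn Token Kind Var B} (hs : SimRel env k s₁ s₂) (ht : SimRel env k t₁ t₂) :
    SimRel env k (Syn.seqn s₁ t₁) (Syn.seqn s₂ t₂) := by
  obtain ⟨s1, s2, s3, s4, s5, s6⟩ := hs
  obtain ⟨t1, t2, t3, t4, t5, t6⟩ := ht
  refine ⟨?_, ?_, ?_, ?_, ?_, ?_⟩
  · intro hf
    rcases first_inv env hf with ⟨hf, hp⟩ | ⟨v, hn, hf⟩
    · exact InFirst.seqnL (s1 hf) (t4.mpr hp)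
    · exact InFirst.seqnR ((s3 _).mpr hn) (t1 hf)
  · intro k' hf
    rcases first_inv env hf with ⟨hf, hp⟩ | ⟨v, hn, hf⟩
    · exact InFirst.seqnL (s2 k' hf) (t4.mp hp)
    · exact InFirst.seqnR ((s3 _).mp hn) (t2 k' hf)
  · intro v
    obtain ⟨x, y⟩ := v
    constructor
    · intro hn
      obtain ⟨g₁, g₂⟩ := nullable_inv env hn
      exact Nullable.seqn ((s3 _).mp g₁) ((t3 _).mp g₂)
    · intro hn
      obtain ⟨g₁, g₂⟩ := nullable_inv env hn
      exact Nullable.seqn ((s3 _).mpr g₁) ((t3 _).mpr g₂)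
  · constructor
    · intro hp
      obtain ⟨g₁, g₂⟩ := productive_inv env hp
      exact Productive.seqn (s4.mp g₁) (t4.mp g₂)
    · intro hp
      obtain ⟨g₁, g₂⟩ := productive_inv env hp
      exact Productive.seqn (s4.mpr g₁) (t4.mpr g₂)
  · intro k' hsn
    rcases snf_inv env hsn with ⟨g₁, v, g₂⟩ | ⟨g₁, g₂⟩
    · exact InSNF.seqnL (s5 k' g₁) ((t3 _).mp g₂)
    · exact InSNF.seqnR (s4.mp g₁) (t5 k' g₂)
  · intro hc
    rcases conflict_inv env hc with ⟨k', g₁, g₂⟩ | g₁ | g₁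
    · exact HasConflict.seqnSF (s5 _ g₁) (t2 _ g₂)
    · exact HasConflict.seqnL (s6 g₁)
    · exact HasConflict.seqnR (t6 g₁)

theorem simRel_unfocus {k : Kind} : ∀ {A B : Type} (c : Ctx Token Kind Var A B)
    {s₁ s₂ : Syn Token Kind Var A}, SimRel env k s₁ s₂ →
    SimRel env k (unfocus s₁ c) (unfocus s₂ c)
  | _, _, Ctx.nil, _, _, h => h
  | _, _, Ctx.cons (Layer.apply f) c, _, _, h => simRel_unfocus c (simRel_map env f h)
  | _, _, Ctx.cons (Layer.prepend v) c, _, _, h =>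
      simRel_unfocus c (simRel_seqn env (simRel_refl env k _) h)
  | _, _, Ctx.cons (Layer.followBy s') c, _, _, h =>
      simRel_unfocus c (simRel_seqn env h (simRel_refl env k _))

theorem simRel_of_equiv {k : Kind} {A : Type} {s₁ s₂ : Syn Token Kind Var A}
    (hF : ∀ k', InFirst env k' s₁ ↔ InFirst env k' s₂)
    (hN : ∀ v, Nullable env s₁ v ↔ Nullable env s₂ v)
    (hP : Productive env s₁ ↔ Productive env s₂)
    (hS : ∀ k', InSNF env k' s₁ ↔ InSNF env k' s₂)
    (hC : HasConflict env s₁ ↔ HasConflict env s₂) : SimRel env k s₁ s₂ :=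
  ⟨(hF k).mpr, fun k' => (hF k').mp, hN, hP, fun k' => (hS k').mp, hC.mp⟩

/-! ### Equivalences used for the `apply` and `prepend` layers -/

theorem equiv_map_eps {A B : Type} (f : A → B) (v : A) (k : Kind) :
    SimRel env k (Syn.map f (Syn.eps v) : Syn Token Kind Var B) (Syn.eps (f v)) ∧
      SimRel env k (Syn.eps (f v)) (Syn.map f (Syn.eps v) : Syn Token Kind Var B) := by
  have hF : ∀ k', InFirst env k' (Syn.map f (Syn.eps v) : Syn Token Kind Var B) ↔
      InFirst env k' (Syn.eps (f v)) := by
    intro k'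
    constructor
    · intro h; exact (first_inv env (first_inv env h : InFirst env k' (Syn.eps v))).elim
    · intro h; exact (first_inv env h).elim
  have hN : ∀ w, Nullable env (Syn.map f (Syn.eps v) : Syn Token Kind Var B) w ↔
      Nullable env (Syn.eps (f v)) w := by
    intro w
    constructor
    · intro h
      obtain ⟨u, hu, rfl⟩ := nullable_inv env h
      rw [nullable_inv env hu]
      exact Nullable.eps _
    · intro h
      rw [nullable_inv env h]
      exact Nullable.map f (Nullable.eps v)
  have hP : Productive env (Syn.map f (Syn.eps v) : Syn Token Kind Var B) ↔
      Productive env (Syn.eps (f v)) :=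
    ⟨fun _ => Productive.eps _, fun _ => Productive.map f (Productive.eps v)⟩
  have hS : ∀ k', InSNF env k' (Syn.map f (Syn.eps v) : Syn Token Kind Var B) ↔
      InSNF env k' (Syn.eps (f v)) := by
    intro k'
    constructor
    · intro h; exact ((snf_inv env (snf_inv env h : InSNF env k' (Syn.eps v)) : False)).elim
    · intro h; exact (snf_inv env h).elim
  have hC : HasConflict env (Syn.map f (Syn.eps v) : Syn Token Kind Var B) ↔
      HasConflict env (Syn.eps (f v)) := by
    constructor
    · intro h
      exact ((conflict_inv env (conflict_inv env h : HasConflict env (Syn.eps v)) :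
        False)).elim
    · intro h; exact (conflict_inv env h).elim
  exact ⟨simRel_of_equiv env hF hN hP hS hC,
    simRel_of_equiv env (fun k' => (hF k').symm) (fun w => (hN w).symm) hP.symm
      (fun k' => (hS k').symm) hC.symm⟩

theorem equiv_pair_eps {A C : Type} (v' : C) (v : A) (k : Kind) :
    SimRel env k (Syn.seqn (Syn.eps v') (Syn.eps v) : Syn Token Kind Var (C × A))
        (Syn.eps (v', v)) ∧
      SimRel env k (Syn.eps (v', v))
        (Syn.seqn (Syn.eps v') (Syn.eps v) : Syn Token Kind Var (C × A)) := by
  have hF : ∀ k',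
      InFirst env k' (Syn.seqn (Syn.eps v') (Syn.eps v) : Syn Token Kind Var (C × A)) ↔
        InFirst env k' (Syn.eps (v', v)) := by
    intro k'
    constructor
    · intro h
      rcases first_inv env h with ⟨h1, _⟩ | ⟨_, _, h2⟩
      · exact (first_inv env h1).elim
      · exact (first_inv env h2).elim
    · intro h; exact (first_inv env h).elim
  have hN : ∀ w,
      Nullable env (Syn.seqn (Syn.eps v') (Syn.eps v) : Syn Token Kind Var (C × A)) w ↔
        Nullable env (Syn.eps (v', v)) w := by
    intro w
    obtain ⟨a, b⟩ := w
    constructor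
    · intro h
      obtain ⟨h₁, h₂⟩ := nullable_inv env h
      rw [show a = v' from nullable_inv env h₁, show b = v from nullable_inv env h₂]
      exact Nullable.eps _
    · intro h
      rw [nullable_inv env h]
      exact Nullable.seqn (Nullable.eps v') (Nullable.eps v)
  have hP :
      Productive env (Syn.seqn (Syn.eps v') (Syn.eps v) : Syn Token Kind Var (C × A)) ↔
        Productive env (Syn.eps (v', v)) :=
    ⟨fun _ => Productive.eps _,
      fun _ => Productive.seqn (Productive.eps v') (Productive.eps v)⟩
  have hS : ∀ k',
      InSNF env k' (Syn.seqn (Syn.eps v') (Syn.eps v) : Syn Token Kind Var (C × A)) ↔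
        InSNF env k' (Syn.eps (v', v)) := by
    intro k'
    constructor
    · intro h
      rcases snf_inv env h with ⟨h1, _⟩ | ⟨_, h2⟩
      · exact (snf_inv env h1).elim
      · exact (snf_inv env h2).elim
    · intro h; exact (snf_inv env h).elim
  have hC :
      HasConflict env (Syn.seqn (Syn.eps v') (Syn.eps v) : Syn Token Kind Var (C × A)) ↔
        HasConflict env (Syn.eps (v', v)) := by
    constructor
    · intro h
      rcases conflict_inv env h with ⟨k', h1, _⟩ | h1 | h1
      · exact (snf_inv env h1).elim
      · exact (conflict_inv env h1).elim
      · exact (conflict_inv env h1).elim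
    · intro h; exact (conflict_inv env h).elim
  exact ⟨simRel_of_equiv env hF hN hP hS hC,
    simRel_of_equiv env (fun k' => (hF k').symm) (fun w => (hN w).symm) hP.symm
      (fun k' => (hS k').symm) hC.symm⟩

/-! ### The key relation for a nullable left factor -/

theorem simRel_null_seqn {k : Kind} {A B : Type} {s : Syn Token Kind Var A} {v : A}
    (t : Syn Token Kind Var B) (hc : ¬ HasConflict env s) (hv : Nullable env s v)
    (hk : ¬ InFirst env k s) :
    SimRel env k (Syn.seqn (Syn.eps v) t) (Syn.seqn s t) := by
  refine ⟨?_, ?_, ?_, ?_, ?_, ?_⟩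
  · intro hf
    rcases first_inv env hf with ⟨hf, _⟩ | ⟨_, _, hf⟩
    · exact absurd hf hk
    · exact InFirst.seqnR (Nullable.eps v) hf
  · intro k' hf
    rcases first_inv env hf with ⟨hf, _⟩ | ⟨_, _, hf⟩
    · exact (first_inv env hf).elim
    · exact InFirst.seqnR hv hf
  · intro w
    obtain ⟨a, b⟩ := w
    constructor
    · intro hn
      obtain ⟨h₁, h₂⟩ := nullable_inv env hn
      rw [show a = v from nullable_inv env h₁]
      exact Nullable.seqn hv h₂
    · intro hn
      obtain ⟨h₁, h₂⟩ := nullable_inv env hn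
      rw [show a = v from (nullable_det env hv hc h₁).symm]
      exact Nullable.seqn (Nullable.eps v) h₂
  · constructor
    · intro hp
      exact Productive.seqn (nullable_productive env hv) (productive_inv env hp).2
    · intro hp
      exact Productive.seqn (Productive.eps v) (productive_inv env hp).2
  · intro k' hsn
    rcases snf_inv env hsn with ⟨h₁, _⟩ | ⟨_, h₂⟩
    · exact (snf_inv env h₁).elim
    · exact InSNF.seqnR (nullable_productive env hv) h₂
  · intro hcc
    rcases conflict_inv env hcc with ⟨k', h₁, _⟩ | h₁ | h₁
    · exact (snf_inv env h₁).elim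
    · exact (conflict_inv env h₁).elim
    · exact HasConflict.seqnR h₁

/-! ### First sets through contexts -/

theorem first_unfocus_null (k : Kind) :
    ∀ {A B : Type} (c : Ctx Token Kind Var A B) (s : Syn Token Kind Var A),
    ¬ HasConflict env (unfocus s c) → InFirst env k (unfocus s c) → ¬ InFirst env k s →
    (∃ v, Nullable env s v) ∧
      ∀ v, Nullable env s v →
        InFirst env k (unfocus (Syn.eps v) c) ∧ ¬ HasConflict env (unfocus (Syn.eps v) c)
  | _, _, Ctx.nil, s, _, hF, hns => absurd hF hns
  | _, _, Ctx.cons (Layer.apply f) c, s, hC, hF, hns => by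
      have hns' : ¬ InFirst env k (Syn.map f s) := fun hh => hns (first_inv env hh)
      obtain ⟨⟨w, hw⟩, h₂⟩ := first_unfocus_null k c (Syn.map f s) hC hF hns'
      constructor
      · obtain ⟨u, hu, _⟩ := nullable_inv env hw
        exact ⟨u, hu⟩
      · intro v hv
        obtain ⟨hF', hC'⟩ := h₂ (f v) (Nullable.map f hv)
        have hrel := simRel_unfocus env c (equiv_map_eps env f v k).1
        exact ⟨hrel.1 hF', fun hc => hC' (hrel.2.2.2.2.2 hc)⟩
  | _, _, Ctx.cons (Layer.prepend v') c, s, hC, hF, hns => by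
      have hns' : ¬ InFirst env k (Syn.seqn (Syn.eps v') s) := fun hh => by
        rcases first_inv env hh with ⟨h1, _⟩ | ⟨_, _, h2⟩
        · exact (first_inv env h1).elim
        · exact hns h2
      obtain ⟨⟨w, hw⟩, h₂⟩ := first_unfocus_null k c (Syn.seqn (Syn.eps v') s) hC hF hns'
      constructor
      · exact ⟨w.2, (nullable_inv env hw).2⟩
      · intro v hv
        obtain ⟨hF', hC'⟩ := h₂ (v', v) (Nullable.seqn (Nullable.eps v') hv)
        have hrel := simRel_unfocus env c (equiv_pair_eps env v' v k).1
        exact ⟨hrel.1 hF', fun hc => hC' (hrel.2.2.2.2.2 hc)⟩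
  | _, _, Ctx.cons (Layer.followBy t) c, s, hC, hF, hns => by
      have hcs : ¬ HasConflict env s := fun hh =>
        hC (conflict_unfocus env c _ (HasConflict.seqnL hh))
      have part2 : ∀ v, Nullable env s v →
          InFirst env k (unfocus (Syn.seqn (Syn.eps v) t) c) ∧
            ¬ HasConflict env (unfocus (Syn.seqn (Syn.eps v) t) c) := by
        intro v hv
        have hrel := simRel_unfocus env c (simRel_null_seqn env t hcs hv hns)
        exact ⟨hrel.1 hF, fun hc => hC (hrel.2.2.2.2.2 hc)⟩
      refine ⟨?_, part2⟩
      by_cases hk2 : InFirst env k (Syn.seqn s t)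
      · rcases first_inv env hk2 with ⟨h1, _⟩ | ⟨v, hn, _⟩
        · exact absurd h1 hns
        · exact ⟨v, hn⟩
      · obtain ⟨⟨w, hw⟩, _⟩ := first_unfocus_null k c (Syn.seqn s t) hC hF hk2
        exact ⟨w.1, (nullable_inv env hw).1⟩

end AuxLemmas


section

variable {Token Kind : Type} {Var : Type → Type}
variable (kd : Token → Kind) (env : ∀ A : Type, Var A → Syn Token Kind Var A)

theorem locate_plug_ne_none (k : Kind)
    (locate : ∀ {B : Type}, Kind → Focused Token Kind Var B →
      Option (Focused Token Kind Var B)) {B₀ : Type} :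
    ∀ {A : Type} (c : Ctx Token Kind Var A B₀) (v : A),
    (∀ {A' : Type} (s' : Syn Token Kind Var A') (c' : Ctx Token Kind Var A' B₀),
        ctxSize c' < ctxSize c → ¬ HasConflict env (unfocus s' c') →
        InFirst env k (unfocus s' c') →
        locate k (⟨A', s', c'⟩ : Focused Token Kind Var B₀) ≠ none) →
    InFirst env k (unfocus (Syn.eps v) c) → ¬ HasConflict env (unfocus (Syn.eps v) c) →
    locate k (plug v c) ≠ none
  | _, Ctx.nil, v, _, hF, _ => (first_inv env hF).elim
  | _, Ctx.cons (Layer.apply f) c, v, hM, hF, hC => by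
      have hrel := simRel_unfocus env c (equiv_map_eps env f v k).2
      refine locate_plug_ne_none k (fun {B} => locate) c (f v) ?_ (hrel.1 hF)
        (fun hc => hC (hrel.2.2.2.2.2 hc))
      intro A' s' c' hlt hc' hf'
      exact hM s' c' (by simp only [ctxSize] at *; omega) hc' hf'
  | _, Ctx.cons (Layer.prepend v') c, v, hM, hF, hC => by
      have hrel := simRel_unfocus env c (equiv_pair_eps env v' v k).2
      refine locate_plug_ne_none k (fun {B} => locate) c (v', v) ?_ (hrel.1 hF)
        (fun hc => hC (hrel.2.2.2.2.2 hc))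
      intro A' s' c' hlt hc' hf'
      exact hM s' c' (by simp only [ctxSize] at *; omega) hc' hf'
  | _, Ctx.cons (Layer.followBy t) c, v, hM, hF, hC => by
      exact hM t (Ctx.cons (Layer.prepend v) c) (by simp only [ctxSize]; omega) hC hF

theorem locate_ne_none (k : Kind)
    (nullOpt : ∀ {A : Type}, Syn Token Kind Var A → Option A)
    (hnull : ∀ {A : Type} (s : Syn Token Kind Var A), ¬ HasConflict env s →
      ∀ v : A, nullOpt s = some v ↔ Nullable env s v)
    (locate : ∀ {B : Type}, Kind → Focused Token Kind Var B →
      Option (Focused Token Kind Var B))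
    (hlocate_first : ∀ {A B : Type} (k : Kind) (s : Syn Token Kind Var A)
      (c : Ctx Token Kind Var A B), InFirst env k s →
      locate k (⟨A, s, c⟩ : Focused Token Kind Var B) =
        some (⟨A, s, c⟩ : Focused Token Kind Var B))
    (hlocate_plug : ∀ {A B : Type} (k : Kind) (s : Syn Token Kind Var A)
      (c : Ctx Token Kind Var A B) (v : A),
      ¬ InFirst env k s → nullOpt s = some v → c.isNil = false →
      locate k (⟨A, s, c⟩ : Focused Token Kind Var B) = locate k (plug v c)) :
    ∀ (n : Nat) {A B : Type} (s : Syn Token Kind Var A) (c : Ctx Token Kind Var A B),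
      ctxSize c ≤ n → ¬ HasConflict env (unfocus s c) → InFirst env k (unfocus s c) →
      locate k (⟨A, s, c⟩ : Focused Token Kind Var B) ≠ none := by
  intro n
  induction n using Nat.strong_induction_on with
  | _ n ih =>
    intro A B s c hsize hC hF
    by_cases hk : InFirst env k s
    · rw [hlocate_first k s c hk]; exact Option.some_ne_none _
    · cases c with
      | nil => exact absurd hF hk
      | cons l c₀ =>
        obtain ⟨⟨v, hv⟩, h₂⟩ := first_unfocus_null env k (Ctx.cons l c₀) s hC hF hk
        obtain ⟨hF', hC'⟩ := h₂ v hv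
        have hcs : ¬ HasConflict env s := fun hh =>
          hC (conflict_unfocus env _ s hh)
        have hsome : nullOpt s = some v := (hnull s hcs v).mpr hv
        rw [hlocate_plug k s (Ctx.cons l c₀) v hk hsome rfl]
        refine locate_plug_ne_none env k (fun {B} => locate) (Ctx.cons l c₀) v ?_ hF' hC'
        intro A' s' c' hlt hc' hf'
        exact ih (ctxSize c') (lt_of_lt_of_le hlt hsize) s' c' le_rfl hc' hf'

theorem deriveF_none_not_first
    (nullOpt : ∀ {A : Type}, Syn Token Kind Var A → Option A)
    (hnull : ∀ {A : Type} (s : Syn Token Kind Var A), ¬ HasConflict env s →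
      ∀ v : A, nullOpt s = some v ↔ Nullable env s v)
    (locate : ∀ {B : Type}, Kind → Focused Token Kind Var B →
      Option (Focused Token Kind Var B))
    (hlocate_first : ∀ {A B : Type} (k : Kind) (s : Syn Token Kind Var A)
      (c : Ctx Token Kind Var A B), InFirst env k s →
      locate k (⟨A, s, c⟩ : Focused Token Kind Var B) =
        some (⟨A, s, c⟩ : Focused Token Kind Var B))
    (hlocate_plug : ∀ {A B : Type} (k : Kind) (s : Syn Token Kind Var A)
      (c : Ctx Token Kind Var A B) (v : A),
      ¬ InFirst env k s → nullOpt s = some v → c.isNil = false →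
      locate k (⟨A, s, c⟩ : Focused Token Kind Var B) = locate k (plug v c))
    (hlocate_none₁ : ∀ {A B : Type} (k : Kind) (s : Syn Token Kind Var A)
      (c : Ctx Token Kind Var A B),
      ¬ InFirst env k s → nullOpt s = none →
      locate k (⟨A, s, c⟩ : Focused Token Kind Var B) = none)
    (hlocate_none₂ : ∀ {A : Type} (k : Kind) (s : Syn Token Kind Var A),
      ¬ InFirst env k s →
      locate k (⟨A, s, Ctx.nil⟩ : Focused Token Kind Var A) = none)
    (pierce : ∀ {A B : Type}, Kind → Syn Token Kind Var A → Ctx Token Kind Var A B →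
      Ctx Token Kind Var Token B)
    (hpierce_elem : ∀ {B : Type} (k : Kind) (c : Ctx Token Kind Var Token B),
      pierce k (Syn.elem k) c = c)
    (hpierce_disj₁ : ∀ {A B : Type} (k : Kind) (s₁ s₂ : Syn Token Kind Var A)
      (c : Ctx Token Kind Var A B),
      ¬ HasConflict env (Syn.disj s₁ s₂) → InFirst env k (Syn.disj s₁ s₂) →
      InFirst env k s₁ → pierce k (Syn.disj s₁ s₂) c = pierce k s₁ c)
    (hpierce_disj₂ : ∀ {A B : Type} (k : Kind) (s₁ s₂ : Syn Token Kind Var A)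
      (c : Ctx Token Kind Var A B),
      ¬ HasConflict env (Syn.disj s₁ s₂) → InFirst env k (Syn.disj s₁ s₂) →
      ¬ InFirst env k s₁ → pierce k (Syn.disj s₁ s₂) c = pierce k s₂ c)
    (hpierce_seqn₁ : ∀ {A B C : Type} (k : Kind) (s₁ : Syn Token Kind Var A)
      (s₂ : Syn Token Kind Var B) (c : Ctx Token Kind Var (A × B) C),
      ¬ HasConflict env (Syn.seqn s₁ s₂) → InFirst env k (Syn.seqn s₁ s₂) →
      (nullOpt s₁ = none ∨ InFirst env k s₁) →
      pierce k (Syn.seqn s₁ s₂) c = pierce k s₁ (Ctx.cons (Layer.followBy s₂) c))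
    (hpierce_seqn₂ : ∀ {A B C : Type} (k : Kind) (s₁ : Syn Token Kind Var A)
      (s₂ : Syn Token Kind Var B) (c : Ctx Token Kind Var (A × B) C) (v : A),
      ¬ HasConflict env (Syn.seqn s₁ s₂) → InFirst env k (Syn.seqn s₁ s₂) →
      nullOpt s₁ = some v → ¬ InFirst env k s₁ →
      pierce k (Syn.seqn s₁ s₂) c = pierce k s₂ (Ctx.cons (Layer.prepend v) c))
    (hpierce_map : ∀ {A B C : Type} (k : Kind) (f : A → B) (s : Syn Token Kind Var A)
      (c : Ctx Token Kind Var B C),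
      ¬ HasConflict env (Syn.map f s) → InFirst env k (Syn.map f s) →
      pierce k (Syn.map f s) c = pierce k s (Ctx.cons (Layer.apply f) c))
    (hpierce_var : ∀ {A B : Type} (k : Kind) (x : Var A) (c : Ctx Token Kind Var A B),
      ¬ HasConflict env (Syn.var x : Syn Token Kind Var A) →
      InFirst env k (Syn.var x : Syn Token Kind Var A) →
      pierce k (Syn.var x) c = pierce k (env A x) c)
    (deriveF : ∀ {B : Type}, Token → Focused Token Kind Var B →
      Option (Focused Token Kind Var B))
    (hderiveF_none : ∀ {B : Type} (t : Token) (fs : Focused Token Kind Var B),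
      locate (kd t) fs = none → deriveF t fs = none)
    (hderiveF_some : ∀ {B : Type} (t : Token) (fs fs' : Focused Token Kind Var B),
      locate (kd t) fs = some fs' →
      deriveF t fs =
        some (⟨Token, Syn.eps t, pierce (kd t) fs'.2.1 fs'.2.2⟩ : Focused Token Kind Var B))
    {A B : Type} (s : Syn Token Kind Var A) (c : Ctx Token Kind Var A B) (t : Token)
    (hll1 : ¬ HasConflict env (unfocus s c))
    (h : deriveF t (⟨A, s, c⟩ : Focused Token Kind Var B) = none) :
    ¬ InFirst env (kd t) (unfocus s c) := by
  intro hF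
  have hne := locate_ne_none env (kd t) @nullOpt @hnull @locate @hlocate_first
    @hlocate_plug (ctxSize c) s c le_rfl hll1 hF
  cases heq : locate (kd t) (⟨A, s, c⟩ : Focused Token Kind Var B) with
  | none => exact hne heq
  | some fs' =>
      rw [hderiveF_some t _ fs' heq] at h
      cases h

end
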